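/- Consider a confidence interval of the form Z ± √2 Φ^{-1}(1−α/2) for (1/√2 + Π^{1/2})μ₁, where Z = m(U,V,Δ) + σ(Π)ξ with ξ ~ N(0,1) independent of (U,V,Δ,Π), σ(Π) > 0 on an event of positive probability. Then on the event A = {|ξ| > √2 Φ^{-1}(1−α/2)/σ(Π), σ(Π) > 0}, which has positive probability under every μ, the conditional coverage probability satisfies P(|Z − (1/√2+Π^{1/2})μ₁| ≤ √2 Φ^{-1}(1−α/2) | A) ≤ 1/2. -/

import Mathlib

open MeasureTheory ProbabilityTheory

lemma gaussian_pos_of_abs_gt (c : ℝ) :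
    0 < (gaussianReal 0 1 : Measure ℝ) {x | c < |x|} := by
  have hone : (1 : NNReal) ≠ 0 := one_ne_zero
  have hsub : Set.Ioi (max c 0) ⊆ {x : ℝ | c < |x|} := by
    intro x hx
    simp only [Set.mem_Ioi] at hx
    have hx0 : 0 < x := lt_of_le_of_lt (le_max_right c 0) hx
    have hcx : c < x := lt_of_le_of_lt (le_max_left c 0) hx
    simp only [Set.mem_setOf_eq, abs_of_pos hx0]
    exact hcx
  refine lt_of_lt_of_le ?_ (measure_mono hsub)
  rw [gaussianReal_apply 0 hone]
  rw [setLIntegral_pos_iff (measurable_gaussianPDF 0 1)]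
  have hsupp : Function.support (gaussianPDF 0 1) = Set.univ := by
    ext x
    simp [Function.mem_support, (gaussianPDF_pos 0 hone x).ne']
  rw [hsupp, Set.univ_inter, Real.volume_Ioi]
  exact ENNReal.zero_lt_top

lemma gaussianReal_map_neg :
    (gaussianReal 0 1 : Measure ℝ).map (fun x => -x) = gaussianReal 0 1 := by
  have := gaussianReal_map_const_mul (μ := 0) (v := 1) (-1)
  have h2 : (fun x : ℝ => -x) = (fun x : ℝ => (-1) * x) := by ext x; ring
  rw [h2]
  convert this using 2 <;> norm_num

/-- recognizable subsets / failure of bet-proofness: if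
`Z = m(U,V,Δ) + σ(Π)ξ` with `ξ ~ N(0,1)` independent of `(m(U,V,Δ), Π)` and `σ(Π) > 0` with
positive probability, then the event `A = {σ(Π) > 0, |ξ| > √2 Φ⁻¹(1−α/2)/σ(Π)}` has positive
probability and, for every `μ₁`, the conditional coverage of the interval
`Z ± √2 Φ⁻¹(1−α/2)` for `(1/√2 + √Π)μ₁` given `A` is at most `1/2`. -/
theorem recognizable_subset_undercoverage
    {Ω : Type*} [MeasurableSpace Ω] (P : Measure Ω) [IsProbabilityMeasure P]
    (M Pr ξ : Ω → ℝ)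
    (hM : Measurable M) (hPr : Measurable Pr) (hξ : Measurable ξ)
    (hξlaw : Measure.map ξ P = gaussianReal 0 1)
    (hindep : IndepFun ξ (fun ω => (M ω, Pr ω)) P)
    (σf : ℝ → ℝ) (hσf : Measurable σf)
    (hσpos : 0 < P {ω | 0 < σf (Pr ω)})
    (α w : ℝ) (hα : α ∈ Set.Ioo (0 : ℝ) (1 / 2))
    (hw : ((gaussianReal 0 1 : Measure ℝ) (Set.Iic (w / Real.sqrt 2))).toReal = 1 - α / 2)
    (Z : Ω → ℝ) (hZ : Z = fun ω => M ω + σf (Pr ω) * ξ ω)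
    (A : Set Ω) (hA : A = {ω | 0 < σf (Pr ω) ∧ w / σf (Pr ω) < |ξ ω|}) :
    0 < P A ∧
      ∀ μ₁ : ℝ,
        (ProbabilityTheory.cond P A)
            {ω | |Z ω - (1 / Real.sqrt 2 + Real.sqrt (Pr ω)) * μ₁| ≤ w}
          ≤ 1 / 2 := by
  classical
  set γ : Measure ℝ := gaussianReal 0 1 with hγ
  set ν : Measure (ℝ × ℝ) := P.map (fun ω => (M ω, Pr ω)) with hν
  have hMPr : Measurable (fun ω => (M ω, Pr ω)) := hM.prodMk hPr
  have hνprob : IsProbabilityMeasure ν := Measure.isProbabilityMeasure_map hMPr.aemeasurable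
  -- joint law of ((M, Pr), ξ) is ν.prod γ
  have hjoint : P.map (fun ω => ((M ω, Pr ω), ξ ω)) = ν.prod γ := by
    have := (indepFun_iff_map_prod_eq_prod_map_map (μ := P)
      hMPr.aemeasurable hξ.aemeasurable).mp hindep.symm
    rw [this, hξlaw]
  set T : Ω → (ℝ × ℝ) × ℝ := fun ω => ((M ω, Pr ω), ξ ω) with hT
  have hTmeas : Measurable T := hMPr.prodMk hξ
  -- the event A upstairs
  set A' : Set ((ℝ × ℝ) × ℝ) :=
    {p | 0 < σf p.1.2 ∧ w / σf p.1.2 < |p.2|} with hA'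
  have hA'meas : MeasurableSet A' := by
    apply MeasurableSet.inter
    · exact measurableSet_lt measurable_const (hσf.comp (measurable_snd.comp measurable_fst))
    · exact measurableSet_lt
        ((measurable_const.div (hσf.comp (measurable_snd.comp measurable_fst))))
        measurable_snd.abs
  have hApre : A = T ⁻¹' A' := by
    rw [hA]; rfl
  have hAmeas : MeasurableSet A := hApre ▸ hTmeas hA'meas
  have hPA : P A = (ν.prod γ) A' := by
    rw [hApre, ← hjoint, Measure.map_apply hTmeas hA'meas]
  -- positivity of P A
  have hApos : 0 < P A := by
    rw [hPA, Measure.prod_apply hA'meas]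
    have hmeas_f : Measurable fun b : ℝ × ℝ => γ (Prod.mk b ⁻¹' A') :=
      measurable_measure_prodMk_left hA'meas
    rw [lintegral_pos_iff_support hmeas_f]
    have hsub : {b : ℝ × ℝ | 0 < σf b.2} ⊆
        Function.support fun b => γ (Prod.mk b ⁻¹' A') := by
      intro b hb
      have hb' : 0 < σf b.2 := hb
      have : Prod.mk b ⁻¹' A' = {x : ℝ | w / σf b.2 < |x|} := by
        ext x
        simp only [Set.mem_preimage, hA', Set.mem_setOf_eq]
        exact ⟨fun h => h.2, fun h => ⟨hb', h⟩⟩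
      simp only [Function.mem_support, this]
      exact (gaussian_pos_of_abs_gt _).ne'
    refine lt_of_lt_of_le ?_ (measure_mono hsub)
    have hms : MeasurableSet {b : ℝ × ℝ | 0 < σf b.2} :=
      measurableSet_lt measurable_const (hσf.comp measurable_snd)
    have : ν {b : ℝ × ℝ | 0 < σf b.2} = P {ω | 0 < σf (Pr ω)} := by
      rw [hν, Measure.map_apply hMPr hms]
      rfl
    rw [this]; exact hσpos
  refine ⟨hApos, fun μ₁ => ?_⟩
  -- the coverage event intersected with A, upstairs
  set c : ℝ → ℝ := fun r => (1 / Real.sqrt 2 + Real.sqrt r) * μ₁ with hc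
  have hcmeas : Measurable c := by
    apply Measurable.mul _ measurable_const
    exact measurable_const.add Real.continuous_sqrt.measurable
  set E' : Set ((ℝ × ℝ) × ℝ) :=
    {p | (0 < σf p.1.2 ∧ w / σf p.1.2 < |p.2|) ∧
      |p.1.1 + σf p.1.2 * p.2 - c p.1.2| ≤ w} with hE'
  have hE'meas : MeasurableSet E' := by
    have h2 : MeasurableSet {p : (ℝ × ℝ) × ℝ | |p.1.1 + σf p.1.2 * p.2 - c p.1.2| ≤ w} := by
      apply measurableSet_le _ measurable_const
      apply Measurable.abs
      apply Measurable.sub _ (hcmeas.comp (measurable_snd.comp measurable_fst))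
      exact (measurable_fst.comp measurable_fst).add
        ((hσf.comp (measurable_snd.comp measurable_fst)).mul measurable_snd)
    exact hA'meas.inter h2
  -- the reflected event
  set S : (ℝ × ℝ) × ℝ → (ℝ × ℝ) × ℝ := fun p => (p.1, -p.2) with hS
  have hSmeas : Measurable S := measurable_fst.prodMk measurable_snd.neg
  have hSinv : (ν.prod γ).map S = ν.prod γ := by
    have : S = Prod.map (id : ℝ × ℝ → ℝ × ℝ) (fun x : ℝ => -x) := rfl
    rw [this, ← Measure.map_prod_map _ _ measurable_id measurable_neg,
      Measure.map_id]
    congr 1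
    exact gaussianReal_map_neg
  -- E' and S ⁻¹' E' are disjoint subsets of A'
  have hdisj : Disjoint E' (S ⁻¹' E') := by
    rw [Set.disjoint_left]
    rintro ⟨⟨m, r⟩, x⟩ ⟨⟨hσ, hx⟩, h1⟩ ⟨-, h2⟩
    simp only [hS, Set.mem_preimage] at h2 ⊢
    -- h2 : |m + σf r * (-x) - c r| ≤ w
    have hσx : w < σf r * |x| := by
      rw [div_lt_iff₀ hσ] at hx
      nlinarith [abs_nonneg x]
    have key : |(m + σf r * x - c r) - (m + σf r * (-x) - c r)| ≤ 2 * w := by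
      calc |(m + σf r * x - c r) - (m + σf r * (-x) - c r)|
          ≤ |m + σf r * x - c r| + |m + σf r * (-x) - c r| := abs_sub _ _
        _ ≤ w + w := add_le_add h1 h2
        _ = 2 * w := by ring
    have : |(m + σf r * x - c r) - (m + σf r * (-x) - c r)| = 2 * (σf r * |x|) := by
      have : (m + σf r * x - c r) - (m + σf r * (-x) - c r) = 2 * (σf r * x) := by ring
      rw [this, abs_mul, abs_mul, abs_of_pos hσ]
      norm_num
    linarith
  have hsubA : E' ∪ S ⁻¹' E' ⊆ A' := by
    rintro p (hp | hp)
    · exact hp.1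
    · have := hp.1
      simpa [hA', hS, abs_neg] using this
  -- same measure by symmetry
  have hmeasEq : (ν.prod γ) (S ⁻¹' E') = (ν.prod γ) E' := by
    conv_rhs => rw [← hSinv]
    rw [Measure.map_apply hSmeas hE'meas]
  have hsum : 2 * (ν.prod γ) E' ≤ (ν.prod γ) A' := by
    have hu := measure_union (μ := ν.prod γ) hdisj (hSmeas hE'meas)
    calc 2 * (ν.prod γ) E' = (ν.prod γ) E' + (ν.prod γ) (S ⁻¹' E') := by
          rw [hmeasEq]; ring
      _ = (ν.prod γ) (E' ∪ S ⁻¹' E') := hu.symm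
      _ ≤ (ν.prod γ) A' := measure_mono hsubA
  -- identify the conditional probability
  set E : Set Ω := {ω | |Z ω - (1 / Real.sqrt 2 + Real.sqrt (Pr ω)) * μ₁| ≤ w} with hE
  have hAE : A ∩ E = T ⁻¹' E' := by
    ext ω
    simp only [Set.mem_inter_iff, hA, hE, hE', Set.mem_setOf_eq, Set.mem_preimage, hT, hZ, hc]
  have hPAE : P (A ∩ E) = (ν.prod γ) E' := by
    rw [hAE, ← hjoint, Measure.map_apply hTmeas hE'meas]
  rw [cond_apply hAmeas, hPAE, hPA]
  have hPAne : (ν.prod γ) A' ≠ 0 := by rw [← hPA]; exact hApos.ne'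
  have hPAfin : (ν.prod γ) A' ≠ ⊤ := by
    rw [← hPA]; exact (measure_lt_top P A).ne
  rw [ENNReal.inv_mul_le_iff hPAne hPAfin]
  have h2 : (2 : ENNReal)⁻¹ * (2 * (ν.prod γ) E') = (ν.prod γ) E' := by
    rw [← mul_assoc, ENNReal.inv_mul_cancel two_ne_zero ENNReal.ofNat_ne_top, one_mul]
  calc (ν.prod γ) E' = 2⁻¹ * (2 * (ν.prod γ) E') := h2.symm
    _ ≤ 2⁻¹ * (ν.prod γ) A' := mul_le_mul_right hsum _
    _ = (ν.prod γ) A' * (1 / 2) := by rw [mul_comm, one_div]
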